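/- A module with the finite exchange property satisfying internal cancellation satisfies the cancellation property: M ⊕ A ≅ M ⊕ B implies A ≅ B. -/

import Mathlib

/-- The finite exchange property for a module M. -/
def FiniteExchange (R : Type u) [Ring R] (M : Type v) [AddCommGroup M]
    [Module R M] : Prop :=
  ∀ (A : Type v) [AddCommGroup A] [Module R A] (n : ℕ)
    (Mp N : Submodule R A) (Ai : Fin n → Submodule R A),
    IsCompl Mp N → Nonempty (↥Mp ≃ₗ[R] M) →
    iSupIndep Ai → iSup Ai = ⊤ →
    ∃ B : Fin n → Submodule R A, (∀ i, B i ≤ Ai i) ∧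
      iSupIndep (Fin.cons Mp B : Fin (n + 1) → Submodule R A) ∧
      iSup (Fin.cons Mp B : Fin (n + 1) → Submodule R A) = ⊤

universe u v

section Helpers
variable {R : Type u} [Ring R] {E : Type v} [AddCommGroup E] [Module R E]

/-- A disjoint pair of submodules: the sup is isomorphic to the product. -/
noncomputable def supEquivProd (p q : Submodule R E) (h : Disjoint p q) :
    (↥p × ↥q) ≃ₗ[R] ↥(p ⊔ q) := by
  have hinj : Function.Injective (p.subtype.coprod q.subtype) := by
    rw [← LinearMap.ker_eq_bot, eq_bot_iff]
    rintro ⟨x, y⟩ hxy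
    simp only [LinearMap.mem_ker, LinearMap.coprod_apply, Submodule.coe_subtype] at hxy
    have hx : (x : E) ∈ p ⊓ q := by
      refine ⟨x.2, ?_⟩
      have : (x : E) = -(y : E) := by
        rw [eq_neg_iff_add_eq_zero]; exact hxy
      rw [this]; exact neg_mem y.2
    rw [h.eq_bot] at hx
    have hx0 : (x : E) = 0 := hx
    have hy0 : (y : E) = 0 := by
      have : (y : E) = -(x : E) := by rw [eq_neg_iff_add_eq_zero, add_comm]; exact hxy
      rw [this, hx0, neg_zero]
    simp only [Submodule.mem_bot, Prod.mk_eq_zero]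
    exact ⟨Subtype.ext hx0, Subtype.ext hy0⟩
  exact (LinearEquiv.ofInjective _ hinj).trans (LinearEquiv.ofEq _ _ (by
    rw [LinearMap.range_coprod, Submodule.range_subtype, Submodule.range_subtype]))

/-- Two complements of the same submodule are isomorphic. -/
noncomputable def complEquiv {p q₁ q₂ : Submodule R E} (h₁ : IsCompl p q₁)
    (h₂ : IsCompl p q₂) : ↥q₁ ≃ₗ[R] ↥q₂ :=
  (Submodule.quotientEquivOfIsCompl p q₁ h₁).symm.trans
    (Submodule.quotientEquivOfIsCompl p q₂ h₂)

lemma isCompl_fst_snd' (X Y : Type v) [AddCommGroup X] [Module R X]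
    [AddCommGroup Y] [Module R Y] :
    IsCompl (Submodule.fst R X Y) (Submodule.snd R X Y) :=
  ⟨disjoint_iff.mpr (Submodule.fst_inf_snd R X Y),
   codisjoint_iff.mpr (Submodule.fst_sup_snd R X Y)⟩

lemma isCompl_map {F : Type v} [AddCommGroup F] [Module R F] (e : E ≃ₗ[R] F)
    {p q : Submodule R E} (h : IsCompl p q) :
    IsCompl (p.map (e : E →ₗ[R] F)) (q.map (e : E →ₗ[R] F)) := by
  have := (Submodule.orderIsoMapComap e).isCompl h
  simpa [Submodule.orderIsoMapComap_apply'] using this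

/-- From an external product decomposition, get an internal one. -/
lemma exists_decomp {X Y : Type v} [AddCommGroup X] [Module R X]
    [AddCommGroup Y] [Module R Y] (e : (X × Y) ≃ₗ[R] E) :
    ∃ P Q : Submodule R E, IsCompl P Q ∧ Nonempty (↥P ≃ₗ[R] X) ∧
      Nonempty (↥Q ≃ₗ[R] Y) :=
  ⟨(Submodule.fst R X Y).map (e : (X × Y) →ₗ[R] E),
   (Submodule.snd R X Y).map (e : (X × Y) →ₗ[R] E),
   isCompl_map e (isCompl_fst_snd' X Y),
   ⟨(e.submoduleMap _).symm.trans (Submodule.fstEquiv R X Y)⟩,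
   ⟨(e.submoduleMap _).symm.trans (Submodule.sndEquiv R X Y)⟩⟩

lemma fin3_le_sup_ne (f : Fin 3 → Submodule R E) (i j k : Fin 3)
    (hj : j ≠ i) (hk : k ≠ i) :
    f j ⊔ f k ≤ ⨆ (l) (_ : l ≠ i), f l :=
  sup_le (le_iSup₂ (f := fun l (_ : l ≠ i) => f l) j hj)
    (le_iSup₂ (f := fun l (_ : l ≠ i) => f l) k hk)

lemma fin3_iSup (f : Fin 3 → Submodule R E) : iSup f = f 0 ⊔ (f 1 ⊔ f 2) := by
  apply le_antisymm
  · exact iSup_le fun i => by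
      fin_cases i
      · exact le_sup_left
      · exact le_sup_of_le_right le_sup_left
      · exact le_sup_of_le_right le_sup_right
  · exact sup_le (le_iSup f 0) (sup_le (le_iSup f 1) (le_iSup f 2))

lemma fin2_iSupIndep (f : Fin 2 → Submodule R E) (h : Disjoint (f 0) (f 1)) :
    iSupIndep f :=
  (iSupIndep_pair (by decide) (by decide)).mpr h

lemma fin2_iSup (f : Fin 2 → Submodule R E) : iSup f = f 0 ⊔ f 1 := by
  apply le_antisymm
  · refine iSup_le fun i => ?_
    fin_cases i
    · exact le_sup_left
    · exact le_sup_right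
  · exact sup_le (le_iSup f 0) (le_iSup f 1)

end Helpers
/-- A module with the finite exchange property satisfying internal cancellation
satisfies the cancellation property. -/
theorem stmt15 {R : Type u} {M : Type v} [Ring R] [AddCommGroup M] [Module R M]
    (hex : FiniteExchange R M)
    (hic : ∀ (A₁ B₁ A₂ B₂ : Submodule R M), IsCompl A₁ B₁ → IsCompl A₂ B₂ →
      Nonempty (↥A₁ ≃ₗ[R] ↥A₂) → Nonempty (↥B₁ ≃ₗ[R] ↥B₂)) :
    ∀ (A : Type v) (B : Type v) [AddCommGroup A] [Module R A]
      [AddCommGroup B] [Module R B],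
      Nonempty ((M × A) ≃ₗ[R] (M × B)) → Nonempty (A ≃ₗ[R] B) := by
  rintro A B _ _ _ _ ⟨φ⟩
  classical
  set fstMB := Submodule.fst R M B with hfstMB
  set sndMB := Submodule.snd R M B with hsndMB
  set Mp : Submodule R (M × B) := (Submodule.fst R M A).map (φ : (M × A) →ₗ[R] M × B) with hMp
  set N : Submodule R (M × B) := (Submodule.snd R M A).map (φ : (M × A) →ₗ[R] M × B) with hN
  have hMN : IsCompl Mp N := isCompl_map φ (isCompl_fst_snd' M A)
  have eMp : ↥Mp ≃ₗ[R] M := (φ.submoduleMap _).symm.trans (Submodule.fstEquiv R M A)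
  have eN : ↥N ≃ₗ[R] A := (φ.submoduleMap _).symm.trans (Submodule.sndEquiv R M A)
  set Ai : Fin 2 → Submodule R (M × B) := ![fstMB, sndMB] with hAi
  have hAiind : iSupIndep Ai := fin2_iSupIndep Ai (by
    simpa [hAi] using disjoint_iff.mpr (Submodule.fst_inf_snd R M B))
  have hAisup : iSup Ai = ⊤ := by
    rw [fin2_iSup]
    simpa [hAi] using Submodule.fst_sup_snd R M B
  obtain ⟨Bv, hBle, hind, hsup⟩ := hex (M × B) 2 Mp N Ai hMN ⟨eMp⟩ hAiind hAisup
  set B₀ := Bv 0 with hB0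
  set B₁ := Bv 1 with hB1
  have hB0le : B₀ ≤ fstMB := by simpa [hAi] using hBle 0
  have hB1le : B₁ ≤ sndMB := by simpa [hAi] using hBle 1
  set f : Fin 3 → Submodule R (M × B) := Fin.cons Mp Bv with hf
  have hf0 : f 0 = Mp := rfl
  have hf1 : f 1 = B₀ := rfl
  have hf2 : f 2 = B₁ := rfl
  have d0 : Disjoint Mp (B₀ ⊔ B₁) := by
    have := (hind 0).mono_right (fin3_le_sup_ne f 0 1 2 (by decide) (by decide))
    rwa [hf0, hf1, hf2] at this
  have d1 : Disjoint B₀ (Mp ⊔ B₁) := by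
    have := (hind 1).mono_right (fin3_le_sup_ne f 1 0 2 (by decide) (by decide))
    rwa [hf0, hf1, hf2] at this
  have d2 : Disjoint B₁ (Mp ⊔ B₀) := by
    have := (hind 2).mono_right (fin3_le_sup_ne f 2 0 1 (by decide) (by decide))
    rwa [hf0, hf1, hf2] at this
  have hsup' : Mp ⊔ (B₀ ⊔ B₁) = ⊤ := by
    rw [← hf0, ← hf1, ← hf2, ← fin3_iSup f]; exact hsup
  set C₁ := fstMB ⊓ (Mp ⊔ B₁) with hC1
  set C₂ := sndMB ⊓ (Mp ⊔ B₀) with hC2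
  have hfst : B₀ ⊔ C₁ = fstMB := by
    have h1 : B₀ ⊔ (Mp ⊔ B₁) = ⊤ := by rw [sup_left_comm]; exact hsup'
    calc B₀ ⊔ C₁ = B₀ ⊔ ((Mp ⊔ B₁) ⊓ fstMB) := by rw [hC1, inf_comm]
      _ = (B₀ ⊔ (Mp ⊔ B₁)) ⊓ fstMB := (sup_inf_assoc_of_le _ hB0le).symm
      _ = fstMB := by rw [h1, top_inf_eq]
  have hsnd : B₁ ⊔ C₂ = sndMB := by
    have h2 : B₁ ⊔ (Mp ⊔ B₀) = ⊤ := by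
      rw [sup_left_comm, sup_comm B₁ B₀]; exact hsup'
    calc B₁ ⊔ C₂ = B₁ ⊔ ((Mp ⊔ B₀) ⊓ sndMB) := by rw [hC2, inf_comm]
      _ = (B₁ ⊔ (Mp ⊔ B₀)) ⊓ sndMB := (sup_inf_assoc_of_le _ hB1le).symm
      _ = sndMB := by rw [h2, top_inf_eq]
  have dC12 : Disjoint C₁ C₂ := by
    have h : C₁ ⊓ C₂ ≤ fstMB ⊓ sndMB := inf_le_inf inf_le_left inf_le_left
    rw [hfstMB, hsndMB, Submodule.fst_inf_snd] at h
    exact disjoint_iff.mpr (le_bot_iff.mp h)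
  have dB0C1 : Disjoint B₀ C₁ := d1.mono_right inf_le_right
  have dB1C2 : Disjoint B₁ C₂ := d2.mono_right inf_le_right
  have dB01 : Disjoint B₀ B₁ := d1.mono_right le_sup_right
  have dBC : Disjoint (B₀ ⊔ B₁) (C₁ ⊔ C₂) := by
    rw [Submodule.disjoint_def]
    intro x hx1 hx2
    obtain ⟨b₀, hb₀, b₁, hb₁, rfl⟩ := Submodule.mem_sup.mp hx1
    obtain ⟨c₁, hc₁, c₂, hc₂, hx⟩ := Submodule.mem_sup.mp hx2
    have hsub : c₁ - b₀ = b₁ - c₂ := by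
      rw [sub_eq_sub_iff_add_eq_add, hx]; exact add_comm _ _
    have hc₁' := Submodule.mem_inf.mp hc₁
    have hc₂' := Submodule.mem_inf.mp hc₂
    have hmem : c₁ - b₀ ∈ fstMB ⊓ sndMB :=
      ⟨sub_mem hc₁'.1 (hB0le hb₀), by rw [hsub]; exact sub_mem (hB1le hb₁) hc₂'.1⟩
    rw [hfstMB, hsndMB, Submodule.fst_inf_snd] at hmem
    have e1 : c₁ = b₀ := sub_eq_zero.mp ((Submodule.mem_bot R).mp hmem)
    have hc₁0 : c₁ = 0 :=
      (Submodule.disjoint_def.mp d1) c₁ (e1 ▸ hb₀) hc₁'.2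
    have e2 : b₁ = c₂ := by
      have : b₁ - c₂ = 0 := by rw [← hsub, e1, sub_self]
      exact sub_eq_zero.mp this
    have hb₁0 : b₁ = 0 :=
      (Submodule.disjoint_def.mp d2) b₁ hb₁ (by rw [e2]; exact hc₂'.2)
    rw [← e1, hc₁0, hb₁0, add_zero]
  have hsupBC : (B₀ ⊔ B₁) ⊔ (C₁ ⊔ C₂) = ⊤ :=
    calc (B₀ ⊔ B₁) ⊔ (C₁ ⊔ C₂) = (B₀ ⊔ C₁) ⊔ (B₁ ⊔ C₂) := sup_sup_sup_comm _ _ _ _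
      _ = fstMB ⊔ sndMB := by rw [hfst, hsnd]
      _ = ⊤ := Submodule.fst_sup_snd R M B
  have hcompl1 : IsCompl (B₀ ⊔ B₁) (C₁ ⊔ C₂) := ⟨dBC, codisjoint_iff.mpr hsupBC⟩
  have hcomplMp' : IsCompl (B₀ ⊔ B₁) Mp :=
    ⟨d0.symm, codisjoint_iff.mpr (by rw [sup_comm]; exact hsup')⟩
  have eqMpC : ↥Mp ≃ₗ[R] ↥(C₁ ⊔ C₂) := complEquiv hcomplMp' hcompl1
  have eqNB : ↥N ≃ₗ[R] ↥(B₀ ⊔ B₁) := complEquiv hMN ⟨d0, codisjoint_iff.mpr hsup'⟩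
  have h₂ : (↥C₁ × ↥C₂) ≃ₗ[R] M :=
    ((supEquivProd C₁ C₂ dC12).trans eqMpC.symm).trans eMp
  have h₁ : (↥B₀ × ↥C₁) ≃ₗ[R] M :=
    ((supEquivProd B₀ C₁ dB0C1).trans (LinearEquiv.ofEq _ _ (hfst.trans hfstMB))).trans
      (Submodule.fstEquiv R M B)
  obtain ⟨P₁, Q₁, hPQ₁, ⟨eP₁⟩, ⟨eQ₁⟩⟩ := exists_decomp h₁
  obtain ⟨P₂, Q₂, hPQ₂, ⟨eP₂⟩, ⟨eQ₂⟩⟩ := exists_decomp h₂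
  obtain ⟨eB0C2⟩ := hic Q₁ P₁ P₂ Q₂ hPQ₁.symm hPQ₂ ⟨eQ₁.trans eP₂.symm⟩
  have eBC : ↥B₀ ≃ₗ[R] ↥C₂ := eP₁.symm.trans (eB0C2.trans eQ₂)
  exact ⟨eN.symm.trans (eqNB.trans (((supEquivProd B₀ B₁ dB01).symm).trans
    ((eBC.prodCongr (LinearEquiv.refl R ↥B₁)).trans ((LinearEquiv.prodComm R _ _).trans
    ((supEquivProd B₁ C₂ dB1C2).trans ((LinearEquiv.ofEq _ _ (hsnd.trans hsndMB)).trans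
    (Submodule.sndEquiv R M B)))))))⟩
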